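/- Fix d ≥ 2 and τ > 0, and let σ be the uniform probability measure on S^{d-1}. For every Borel probability measure μ on S^{d-1}, the pairwise energy satisfies ∬ exp(⟨u, v⟩/τ) dμ(u) dμ(v) ≥ ∬ exp(⟨u, v⟩/τ) dσ(u) dσ(v), with equality if and only if μ = σ; i.e. σ is the unique minimizer of the energy functional μ ↦ ∬ exp(⟨u,v⟩/τ) dμ dμ over Borel probability measures on S^{d-1}. -/

import Mathlib

open MeasureTheory Metric

/-- The rotation of a point of the unit sphere by a linear isometric equivalence of the
ambient Euclidean space. -/
noncomputable def sphereRot {d : ℕ}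
    (T : EuclideanSpace ℝ (Fin d) ≃ₗᵢ[ℝ] EuclideanSpace ℝ (Fin d))
    (u : sphere (0 : EuclideanSpace ℝ (Fin d)) 1) :
    sphere (0 : EuclideanSpace ℝ (Fin d)) 1 :=
  ⟨T u, by
    rw [mem_sphere_zero_iff_norm, T.norm_map, ← mem_sphere_zero_iff_norm]
    exact u.2⟩

namespace UniformMinAux

abbrev Sph (d : ℕ) := sphere (0 : EuclideanSpace ℝ (Fin d)) 1
variable {d : ℕ}
noncomputable def mono {k : ℕ} (α : Fin k → Fin d) (u : Sph d) : ℝ :=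
  ∏ j, (u : EuclideanSpace ℝ (Fin d)) (α j)
lemma continuous_coord (i : Fin d) :
    Continuous fun u : Sph d => (u : EuclideanSpace ℝ (Fin d)) i :=
  (EuclideanSpace.proj i).continuous.comp continuous_subtype_val
lemma continuous_mono {k : ℕ} (α : Fin k → Fin d) : Continuous (mono α) :=
  continuous_finset_prod _ fun j _ => continuous_coord (α j)
lemma inner_pow (u v : Sph d) (k : ℕ) :
    ((inner ℝ (u : EuclideanSpace ℝ (Fin d)) (v : EuclideanSpace ℝ (Fin d)) : ℝ)) ^ k
      = ∑ α : Fin k → Fin d, mono α u * mono α v := by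
  have h : (inner ℝ (u : EuclideanSpace ℝ (Fin d)) (v : EuclideanSpace ℝ (Fin d)) : ℝ)
      = ∑ i, (u : EuclideanSpace ℝ (Fin d)) i * (v : EuclideanSpace ℝ (Fin d)) i := by
    rw [PiLp.inner_apply]; simp [RCLike.inner_apply, conj_trivial, mul_comm]
  rw [h, Fintype.sum_pow]
  refine Finset.sum_congr rfl fun α _ => ?_
  rw [mono, mono, ← Finset.prod_mul_distrib]
lemma abs_inner_le_one (u v : Sph d) :
    |(inner ℝ (u : EuclideanSpace ℝ (Fin d)) (v : EuclideanSpace ℝ (Fin d)) : ℝ)| ≤ 1 := by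
  have h1 := mem_sphere_zero_iff_norm.mp u.2
  have h2 := mem_sphere_zero_iff_norm.mp v.2
  calc |(inner ℝ (u : EuclideanSpace ℝ (Fin d)) (v : EuclideanSpace ℝ (Fin d)) : ℝ)|
      ≤ ‖(u : EuclideanSpace ℝ (Fin d))‖ * ‖(v : EuclideanSpace ℝ (Fin d))‖ :=
        abs_real_inner_le_norm _ _
    _ = 1 := by rw [h1, h2, mul_one]
lemma continuous_inner2 : Continuous (fun z : Sph d × Sph d =>
    (inner ℝ (z.1 : EuclideanSpace ℝ (Fin d)) (z.2 : EuclideanSpace ℝ (Fin d)) : ℝ)) :=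
  (continuous_subtype_val.comp continuous_fst).inner (continuous_subtype_val.comp continuous_snd)
lemma integrable_cont {X : Type*} [TopologicalSpace X] [CompactSpace X] [MeasurableSpace X]
    [OpensMeasurableSpace X] (ν : Measure X) [IsFiniteMeasure ν]
    {f : X → ℝ} (hf : Continuous f) : Integrable f ν :=
  hf.integrable_of_hasCompactSupport (HasCompactSupport.of_compactSpace _)

lemma hasSum_energy {τ : ℝ} (hτ : 0 < τ)
    (μ ν : Measure (Sph d)) [IsProbabilityMeasure μ] [IsProbabilityMeasure ν] :
    HasSum (fun k : ℕ => (τ ^ k * k.factorial)⁻¹ *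
        ∑ α : Fin k → Fin d, (∫ u, mono α u ∂μ) * (∫ v, mono α v ∂ν))
      (∫ z : Sph d × Sph d, Real.exp ((inner ℝ (z.1 : EuclideanSpace ℝ (Fin d))
        (z.2 : EuclideanSpace ℝ (Fin d)) : ℝ) / τ) ∂(μ.prod ν)) := by
  set P := μ.prod ν with hP
  set inn : Sph d × Sph d → ℝ := fun z =>
    (inner ℝ (z.1 : EuclideanSpace ℝ (Fin d)) (z.2 : EuclideanSpace ℝ (Fin d)) : ℝ) with hinn
  set F : ℕ → Sph d × Sph d → ℝ := fun k z => (inn z / τ) ^ k / k.factorial with hF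
  have hFc : ∀ k, Continuous (F k) := fun k =>
    (((continuous_inner2 (d := d)).div_const τ).pow k).div_const _
  have hFi : ∀ k, Integrable (F k) P := fun k => integrable_cont _ (hFc k)
  have hbound : ∀ k z, ‖F k z‖ ≤ (1 / τ) ^ k / k.factorial := by
    intro k z
    have h1 : |inn z| ≤ 1 := abs_inner_le_one _ _
    have hfac : (0 : ℝ) < k.factorial := by positivity
    rw [hF, Real.norm_eq_abs, abs_div, abs_pow, abs_div, Nat.abs_cast, abs_of_pos hτ]
    gcongr
  have hsum_norm : Summable fun k => ∫ z, ‖F k z‖ ∂P := by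
    refine Summable.of_nonneg_of_le (fun k => integral_nonneg fun z => norm_nonneg _)
      (fun k => ?_) (Real.summable_pow_div_factorial (1 / τ))
    calc ∫ z, ‖F k z‖ ∂P ≤ ∫ _z, (1 / τ) ^ k / k.factorial ∂P :=
          integral_mono (hFi k).norm (integrable_const _) (fun z => hbound k z)
      _ = (1 / τ) ^ k / k.factorial := by simp
  have H := hasSum_integral_of_summable_integral_norm hFi hsum_norm
  have hexp : (fun z : Sph d × Sph d => ∑' k, F k z)
      = fun z => Real.exp (inn z / τ) := by
    funext z
    rw [Real.exp_eq_exp_ℝ, NormedSpace.exp_eq_tsum_div]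
  rw [hexp] at H
  have hint : ∀ k, ∫ z, F k z ∂P = (τ ^ k * k.factorial)⁻¹ *
      ∑ α : Fin k → Fin d, (∫ u, mono α u ∂μ) * (∫ v, mono α v ∂ν) := by
    intro k
    have h1 : ∀ z : Sph d × Sph d, F k z =
        (τ ^ k * k.factorial)⁻¹ * (inn z) ^ k := by
      intro z
      rw [hF]
      simp only
      rw [div_pow]
      have hτk : (τ : ℝ) ^ k ≠ 0 := by positivity
      have hfk : ((k.factorial : ℝ)) ≠ 0 := by positivity
      field_simp
    have h2 : ∀ z : Sph d × Sph d, F k z =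
        (τ ^ k * k.factorial)⁻¹ * ∑ α : Fin k → Fin d, mono α z.1 * mono α z.2 := by
      intro z
      rw [h1 z, hinn]
      simp only
      rw [inner_pow]
    simp_rw [h2]
    rw [integral_const_mul]
    congr 1
    rw [integral_finset_sum (μ := P) Finset.univ
      (f := fun (α : Fin k → Fin d) (z : Sph d × Sph d) => mono α z.1 * mono α z.2)
      (fun α _ => integrable_cont _
        (((continuous_mono α).comp continuous_fst).mul ((continuous_mono α).comp continuous_snd)))]
    exact Finset.sum_congr rfl fun α _ => integral_prod_mul (mono α) (mono α)
  simpa only [hint] using H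


lemma continuous_kernel {τ : ℝ} : Continuous (fun z : Sph d × Sph d =>
    Real.exp ((inner ℝ (z.1 : EuclideanSpace ℝ (Fin d))
      (z.2 : EuclideanSpace ℝ (Fin d)) : ℝ) / τ)) :=
  Real.continuous_exp.comp (continuous_inner2.div_const τ)

lemma integral_exp_inner_const {τ : ℝ} (σ : Measure (Sph d)) [IsProbabilityMeasure σ]
    (hσ : ∀ T : EuclideanSpace ℝ (Fin d) ≃ₗᵢ[ℝ] EuclideanSpace ℝ (Fin d),
      σ.map (sphereRot T) = σ) (u u' : Sph d) :
    ∫ v, Real.exp ((inner ℝ (u : EuclideanSpace ℝ (Fin d))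
        (v : EuclideanSpace ℝ (Fin d)) : ℝ) / τ) ∂σ
      = ∫ v, Real.exp ((inner ℝ (u' : EuclideanSpace ℝ (Fin d))
        (v : EuclideanSpace ℝ (Fin d)) : ℝ) / τ) ∂σ := by
  set T := Submodule.reflection (ℝ ∙ ((u : EuclideanSpace ℝ (Fin d)) - (u' : EuclideanSpace ℝ (Fin d))))ᗮ
    with hTdef
  have hnorm : ‖(u : EuclideanSpace ℝ (Fin d))‖ = ‖(u' : EuclideanSpace ℝ (Fin d))‖ := by
    rw [mem_sphere_zero_iff_norm.mp u.2, mem_sphere_zero_iff_norm.mp u'.2]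
  have hT : T (u : EuclideanSpace ℝ (Fin d)) = (u' : EuclideanSpace ℝ (Fin d)) :=
    Submodule.reflection_sub hnorm
  have hmeas : AEMeasurable (sphereRot T) σ :=
    (Continuous.measurable (Continuous.subtype_mk
      (T.continuous.comp continuous_subtype_val) _)).aemeasurable
  have hcont : Continuous fun v : Sph d => Real.exp ((inner ℝ (u' : EuclideanSpace ℝ (Fin d))
      (v : EuclideanSpace ℝ (Fin d)) : ℝ) / τ) :=
    Real.continuous_exp.comp ((Continuous.inner continuous_const continuous_subtype_val).div_const τ)
  calc ∫ v, Real.exp ((inner ℝ (u : EuclideanSpace ℝ (Fin d))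
        (v : EuclideanSpace ℝ (Fin d)) : ℝ) / τ) ∂σ
      = ∫ v, Real.exp ((inner ℝ (u' : EuclideanSpace ℝ (Fin d))
          ((sphereRot T v : Sph d) : EuclideanSpace ℝ (Fin d)) : ℝ) / τ) ∂σ := by
        refine integral_congr_ae (Filter.Eventually.of_forall fun v => ?_)
        have : ((sphereRot T v : Sph d) : EuclideanSpace ℝ (Fin d))
            = T (v : EuclideanSpace ℝ (Fin d)) := rfl
        simp only
        rw [this, ← hT, T.inner_map_map]
    _ = ∫ v, Real.exp ((inner ℝ (u' : EuclideanSpace ℝ (Fin d))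
          (v : EuclideanSpace ℝ (Fin d)) : ℝ) / τ) ∂(σ.map (sphereRot T)) :=
        (integral_map hmeas hcont.aestronglyMeasurable).symm
    _ = ∫ v, Real.exp ((inner ℝ (u' : EuclideanSpace ℝ (Fin d))
          (v : EuclideanSpace ℝ (Fin d)) : ℝ) / τ) ∂σ := by rw [hσ T]


lemma continuous_integralCM (ν : Measure (Sph d)) [IsProbabilityMeasure ν] :
    Continuous fun f : C(Sph d, ℝ) => ∫ u, f u ∂ν := by
  refine (LipschitzWith.of_dist_le_mul (K := 1) fun f g => ?_).continuous
  rw [NNReal.coe_one, one_mul, dist_eq_norm,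
    ← integral_sub (integrable_cont ν f.continuous) (integrable_cont ν g.continuous)]
  calc ‖∫ u, (f u - g u) ∂ν‖ ≤ dist f g * (ν Set.univ).toReal := by
        refine norm_integral_le_of_norm_le_const (Filter.Eventually.of_forall fun u => ?_)
        rw [Real.norm_eq_abs, ← Real.dist_eq]
        exact ContinuousMap.dist_apply_le_dist u
    _ = dist f g := by simp

lemma mono_append {k l : ℕ} (α : Fin k → Fin d) (β : Fin l → Fin d) (u : Sph d) :
    mono (Fin.append α β) u = mono α u * mono β u := by
  rw [mono, mono, mono, Fin.prod_univ_add]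
  congr 1
  · exact Finset.prod_congr rfl fun j _ => by rw [Fin.append_left]
  · exact Finset.prod_congr rfl fun j _ => by rw [Fin.append_right]

lemma measure_eq_of_moments (μ σ : Measure (Sph d)) [IsProbabilityMeasure μ]
    [IsProbabilityMeasure σ]
    (h : ∀ (k : ℕ) (α : Fin k → Fin d), ∫ u, mono α u ∂μ = ∫ u, mono α u ∂σ) :
    μ = σ := by
  have key : ∀ f : C(Sph d, ℝ), ∫ u, f u ∂μ = ∫ u, f u ∂σ := by
    set c : Fin d → C(Sph d, ℝ) :=
      fun i => ⟨fun u => (u : EuclideanSpace ℝ (Fin d)) i, continuous_coord i⟩ with hc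
    set A : Subalgebra ℝ C(Sph d, ℝ) := Algebra.adjoin ℝ (Set.range c) with hA
    have hsep : A.SeparatesPoints := by
      intro u v huv
      have hne : (u : EuclideanSpace ℝ (Fin d)) ≠ (v : EuclideanSpace ℝ (Fin d)) :=
        fun hh => huv (Subtype.ext hh)
      obtain ⟨i, hi⟩ : ∃ i, (u : EuclideanSpace ℝ (Fin d)) i ≠ (v : EuclideanSpace ℝ (Fin d)) i := by
        by_contra hcon
        push_neg at hcon
        exact hne (PiLp.ext hcon)
      exact ⟨(c i : Sph d → ℝ), ⟨c i, Algebra.subset_adjoin ⟨i, rfl⟩, rfl⟩, hi⟩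
    -- every element of the monoid closure is a monomial
    have hrep : ∀ f : C(Sph d, ℝ), f ∈ Submonoid.closure (Set.range c) →
        ∃ (k : ℕ) (α : Fin k → Fin d), ∀ u, f u = mono α u := by
      intro f hf
      induction hf using Submonoid.closure_induction with
      | mem x hx =>
        obtain ⟨i, rfl⟩ := hx
        exact ⟨1, fun _ => i, fun u => by simp [mono, hc]⟩
      | one => exact ⟨0, Fin.elim0, fun u => by simp [mono]⟩
      | mul x y hx hy ihx ihy =>
        obtain ⟨k, α, hα⟩ := ihx
        obtain ⟨l, β, hβ⟩ := ihy
        refine ⟨k + l, Fin.append α β, fun u => ?_⟩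
        rw [ContinuousMap.mul_apply, hα, hβ, mono_append]
    -- integrals agree on the subalgebra
    have hAint : ∀ f : C(Sph d, ℝ), f ∈ A → ∫ u, f u ∂μ = ∫ u, f u ∂σ := by
      intro f hf
      have hf' : f ∈ Submodule.span ℝ (Submonoid.closure (Set.range c) : Set C(Sph d, ℝ)) := by
        rw [← Algebra.adjoin_eq_span]
        exact hf
      clear hf
      induction hf' using Submodule.span_induction with
      | mem x hx =>
        obtain ⟨k, α, hα⟩ := hrep x hx
        simp_rw [hα]
        exact h k α
      | zero => simp
      | add x y hx hy ihx ihy =>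
        simp only [ContinuousMap.add_apply]
        rw [integral_add (integrable_cont μ x.continuous) (integrable_cont μ y.continuous),
          integral_add (integrable_cont σ x.continuous) (integrable_cont σ y.continuous), ihx, ihy]
      | smul a x hx ihx =>
        simp only [ContinuousMap.smul_apply, smul_eq_mul]
        rw [integral_const_mul, integral_const_mul, ihx]
    -- pass to the closure via Stone–Weierstrass
    intro f
    have hf : f ∈ closure (A : Set C(Sph d, ℝ)) :=
      ContinuousMap.continuousMap_mem_subalgebra_closure_of_separatesPoints A hsep f
    have hclosed : IsClosed {g : C(Sph d, ℝ) | ∫ u, g u ∂μ = ∫ u, g u ∂σ} :=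
      isClosed_eq (continuous_integralCM μ) (continuous_integralCM σ)
    exact hclosed.closure_subset_iff.mpr (fun g hg => hAint g hg) hf
  -- conclude equality of measures
  apply ext_of_forall_lintegral_eq_of_IsFiniteMeasure
  intro f
  have hfc : Continuous fun x : Sph d => (f x : ℝ) :=
    NNReal.continuous_coe.comp f.continuous
  rw [lintegral_coe_eq_integral _ (integrable_cont μ hfc),
    lintegral_coe_eq_integral _ (integrable_cont σ hfc)]
  congr 1
  exact key ⟨fun x => (f x : ℝ), hfc⟩


end UniformMinAux

open UniformMinAux

theorem uniform_minimizes_energy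
    {d : ℕ} (hd : 2 ≤ d) {τ : ℝ} (hτ : 0 < τ)
    (σ : Measure (sphere (0 : EuclideanSpace ℝ (Fin d)) 1)) [IsProbabilityMeasure σ]
    (hσ : ∀ T : EuclideanSpace ℝ (Fin d) ≃ₗᵢ[ℝ] EuclideanSpace ℝ (Fin d),
      σ.map (sphereRot T) = σ)
    (μ : Measure (sphere (0 : EuclideanSpace ℝ (Fin d)) 1)) [IsProbabilityMeasure μ] :
    (∫ u, ∫ v, Real.exp ((inner ℝ (u : EuclideanSpace ℝ (Fin d))
        (v : EuclideanSpace ℝ (Fin d)) : ℝ) / τ) ∂σ ∂σ)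
      ≤ ∫ u, ∫ v, Real.exp ((inner ℝ (u : EuclideanSpace ℝ (Fin d))
        (v : EuclideanSpace ℝ (Fin d)) : ℝ) / τ) ∂μ ∂μ
    ∧
    ((∫ u, ∫ v, Real.exp ((inner ℝ (u : EuclideanSpace ℝ (Fin d))
        (v : EuclideanSpace ℝ (Fin d)) : ℝ) / τ) ∂μ ∂μ)
      = (∫ u, ∫ v, Real.exp ((inner ℝ (u : EuclideanSpace ℝ (Fin d))
        (v : EuclideanSpace ℝ (Fin d)) : ℝ) / τ) ∂σ ∂σ) ↔ μ = σ) := by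
  classical
  -- the kernel as a function on the product
  set ker : Sph d × Sph d → ℝ := fun z =>
    Real.exp ((inner ℝ (z.1 : EuclideanSpace ℝ (Fin d))
      (z.2 : EuclideanSpace ℝ (Fin d)) : ℝ) / τ) with hker
  have hkerc : Continuous ker := continuous_kernel
  -- iterated integrals as product integrals
  have hiter : ∀ (ν ν' : Measure (Sph d)), ∀ (_ : IsProbabilityMeasure ν)
      (_ : IsProbabilityMeasure ν'),
      (∫ u, ∫ v, Real.exp ((inner ℝ (u : EuclideanSpace ℝ (Fin d))
        (v : EuclideanSpace ℝ (Fin d)) : ℝ) / τ) ∂ν' ∂ν) = ∫ z, ker z ∂(ν.prod ν') := by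
    intro ν ν' _ _
    exact (integral_prod ker (integrable_cont _ hkerc)).symm
  have hμμ := hiter μ μ inferInstance inferInstance
  have hσσ := hiter σ σ inferInstance inferInstance
  have hμσ := hiter μ σ inferInstance inferInstance
  -- the cross term equals the σ-energy
  have hcross : ∫ z, ker z ∂(μ.prod σ) = ∫ z, ker z ∂(σ.prod σ) := by
    have hu₀ : EuclideanSpace.single (⟨0, by omega⟩ : Fin d) (1 : ℝ) ∈ Sph d := by
      rw [mem_sphere_zero_iff_norm, EuclideanSpace.norm_single, norm_one]
    set u₀ : Sph d := ⟨_, hu₀⟩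
    have hg : ∀ u : Sph d, (∫ v, Real.exp ((inner ℝ (u : EuclideanSpace ℝ (Fin d))
        (v : EuclideanSpace ℝ (Fin d)) : ℝ) / τ) ∂σ)
        = ∫ v, Real.exp ((inner ℝ (u₀ : EuclideanSpace ℝ (Fin d))
        (v : EuclideanSpace ℝ (Fin d)) : ℝ) / τ) ∂σ :=
      fun u => integral_exp_inner_const σ hσ u u₀
    rw [← hiter μ σ inferInstance inferInstance, ← hiter σ σ inferInstance inferInstance]
    calc (∫ u, ∫ v, Real.exp ((inner ℝ (u : EuclideanSpace ℝ (Fin d))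
          (v : EuclideanSpace ℝ (Fin d)) : ℝ) / τ) ∂σ ∂μ)
        = ∫ _u, (∫ v, Real.exp ((inner ℝ (u₀ : EuclideanSpace ℝ (Fin d))
          (v : EuclideanSpace ℝ (Fin d)) : ℝ) / τ) ∂σ) ∂μ := by
          exact integral_congr_ae (Filter.Eventually.of_forall fun u => hg u)
      _ = ∫ v, Real.exp ((inner ℝ (u₀ : EuclideanSpace ℝ (Fin d))
          (v : EuclideanSpace ℝ (Fin d)) : ℝ) / τ) ∂σ := by simp
      _ = ∫ _u, (∫ v, Real.exp ((inner ℝ (u₀ : EuclideanSpace ℝ (Fin d))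
          (v : EuclideanSpace ℝ (Fin d)) : ℝ) / τ) ∂σ) ∂σ := by simp
      _ = ∫ u, ∫ v, Real.exp ((inner ℝ (u : EuclideanSpace ℝ (Fin d))
          (v : EuclideanSpace ℝ (Fin d)) : ℝ) / τ) ∂σ ∂σ :=
          (integral_congr_ae (Filter.Eventually.of_forall fun u => hg u)).symm
  -- the three series expansions
  set Af : ∀ k : ℕ, (Fin k → Fin d) → ℝ := fun k α => ∫ u, mono α u ∂μ with hAf
  set Bf : ∀ k : ℕ, (Fin k → Fin d) → ℝ := fun k α => ∫ u, mono α u ∂σ with hBf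
  set c : ℕ → ℝ := fun k => (τ ^ k * k.factorial)⁻¹ with hcdef
  have Hμμ := hasSum_energy hτ μ μ
  have Hμσ := hasSum_energy hτ μ σ
  have Hσσ := hasSum_energy hτ σ σ
  have Hcomb := (Hμμ.sub (Hμσ.mul_left 2)).add Hσσ
  have hfun : (fun k : ℕ =>
        (c k * ∑ α : Fin k → Fin d, Af k α * Af k α
          - 2 * (c k * ∑ α : Fin k → Fin d, Af k α * Bf k α))
        + c k * ∑ α : Fin k → Fin d, Bf k α * Bf k α)
      = fun k : ℕ => c k * ∑ α : Fin k → Fin d, (Af k α - Bf k α) ^ 2 := by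
    funext k
    have e1 : ∑ α : Fin k → Fin d, (Af k α - Bf k α) ^ 2
        = (∑ α : Fin k → Fin d, Af k α * Af k α)
          - 2 * (∑ α : Fin k → Fin d, Af k α * Bf k α)
          + ∑ α : Fin k → Fin d, Bf k α * Bf k α := by
      rw [Finset.mul_sum, ← Finset.sum_sub_distrib, ← Finset.sum_add_distrib]
      exact Finset.sum_congr rfl fun α _ => by ring
    rw [e1]; ring
  rw [hfun] at Hcomb
  -- Hcomb : HasSum (fun k => c k * ∑ (A-B)^2) (Eμμ - 2 Eμσ + Eσσ)
  rw [hcross] at Hcomb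
  have hval : (∫ z, ker z ∂(μ.prod μ)) - 2 * ∫ z, ker z ∂(σ.prod σ)
      + ∫ z, ker z ∂(σ.prod σ)
      = (∫ z, ker z ∂(μ.prod μ)) - ∫ z, ker z ∂(σ.prod σ) := by ring
  rw [hval] at Hcomb
  have hnn : ∀ k : ℕ, 0 ≤ c k * ∑ α : Fin k → Fin d, (Af k α - Bf k α) ^ 2 := by
    intro k
    have h1 : 0 ≤ c k := by rw [hcdef]; positivity
    exact mul_nonneg h1 (Finset.sum_nonneg fun α _ => sq_nonneg _)
  have hle : (0 : ℝ) ≤ (∫ z, ker z ∂(μ.prod μ)) - ∫ z, ker z ∂(σ.prod σ) :=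
    hasSum_le hnn hasSum_zero Hcomb
  constructor
  · rw [hμμ, hσσ]; linarith
  constructor
  · -- equality implies μ = σ
    intro heq
    rw [hμμ, hσσ] at heq
    rw [heq, sub_self] at Hcomb
    have hzero : ∀ k : ℕ, c k * ∑ α : Fin k → Fin d, (Af k α - Bf k α) ^ 2 = 0 := by
      intro k
      refine le_antisymm ?_ (hnn k)
      have := Summable.le_tsum Hcomb.summable k (fun j _ => hnn j)
      rwa [Hcomb.tsum_eq] at this
    refine measure_eq_of_moments μ σ fun k α => ?_
    have hck : c k ≠ 0 := by rw [hcdef]; positivity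
    have hsum0 : ∑ α : Fin k → Fin d, (Af k α - Bf k α) ^ 2 = 0 := by
      have := hzero k
      exact (mul_eq_zero.mp this).resolve_left hck
    have := (Finset.sum_eq_zero_iff_of_nonneg (fun α _ => sq_nonneg (Af k α - Bf k α))).mp
      hsum0 α (Finset.mem_univ α)
    have h2 : Af k α = Bf k α := by
      have := pow_eq_zero_iff (n := 2) (by norm_num) |>.mp this
      linarith [this]
    exact h2
  · intro heq
    rw [heq]
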